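/- Suppose β + L_g < 0, fix X ∈ ℝⁿ, and assume sup_{t≤0} ‖G(X,0,t)‖ < ∞. Then there exists a unique bounded continuous function Ȳ : (−∞,0] → ℝᵐ satisfying Ȳ(t) = ∫_{−∞}^t exp((t−s)B) G(X,Ȳ(s),s) ds for all t ≤ 0; moreover Ȳ is continuously differentiable and solves Ȳ′(t) = B Ȳ(t) + G(X,Ȳ(t),t) for all t ≤ 0. (Its value h⁰(X) := Ȳ(0) defines the frozen-slow-variable graph map.) -/

import Mathlib

open MeasureTheory Set

set_option synthInstance.maxHeartbeats 1000000
set_option maxHeartbeats 1000000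

noncomputable section

/-- `ℝᵏ` with the Euclidean norm. -/
abbrev Euc (k : ℕ) := EuclideanSpace ℝ (Fin k)

/-- The operator exponential `exp (t • A)` of a linear operator (matrix) `A` on `ℝᵏ`. -/
def expOp {k : ℕ} (A : Euc k →L[ℝ] Euc k) (t : ℝ) : Euc k →L[ℝ] Euc k :=
  NormedSpace.exp (t • A)

/-- Membership in the space `C⁻_ρ`: continuity on `(-∞,0]` together with finiteness of the
weighted sup norm `sup_{t ≤ 0} e^{-ρ t} ‖u t‖`. -/
def memCm (ρ : ℝ) {E : Type*} [NormedAddCommGroup E] (u : ℝ → E) : Prop :=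
  ContinuousOn u (Set.Iic 0) ∧ ∃ C : ℝ, ∀ t ≤ (0:ℝ), Real.exp (-ρ * t) * ‖u t‖ ≤ C

/-- The weighted sup norm `‖u‖_ρ = sup_{t ≤ 0} e^{-ρ t} ‖u t‖` on `C⁻_ρ`. -/
def nrm (ρ : ℝ) {E : Type*} [NormedAddCommGroup E] (u : ℝ → E) : ℝ :=
  ⨆ t : Set.Iic (0:ℝ), Real.exp (-ρ * (t : ℝ)) * ‖u t‖

section Aux

lemma aux_integrableOn_exp_mul_Iic {b : ℝ} (hb : 0 < b) (t : ℝ) :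
    IntegrableOn (fun s : ℝ => Real.exp (b * s)) (Iic t) := by
  have A : MeasurableEmbedding fun x : ℝ => -x :=
    (Homeomorph.neg ℝ).measurableEmbedding
  have h0 : IntegrableOn (fun x : ℝ => Real.exp (-b * x)) (Ici (-t)) :=
    (integrableOn_Ici_iff_integrableOn_Ioi).mpr (exp_neg_integrableOn_Ioi (-t) hb)
  have h1 := (A.integrableOn_map_iff (μ := volume)
    (f := fun x : ℝ => Real.exp (-b * x)) (s := Ici (-t)))
  rw [Measure.map_neg_eq_self] at h1
  have h2 := h1.mp h0
  have hset : (fun x : ℝ => -x) ⁻¹' (Ici (-t)) = Iic t := by ext x; simp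
  rw [hset] at h2
  simpa [Function.comp_def, neg_mul_neg] using h2

lemma aux_integral_exp_mul_Iic {b : ℝ} (hb : 0 < b) (t : ℝ) :
    ∫ s in Iic t, Real.exp (b * s) = Real.exp (b * t) / b := by
  have h1 : ∫ s in Iic t, Real.exp (b * s) = ∫ x in Ioi (-t), Real.exp (-(b * x)) := by
    rw [← integral_comp_neg_Iic t (fun x => Real.exp (-(b * x)))]
    simp [mul_neg]
  rw [h1, show (fun x : ℝ => Real.exp (-(b * x))) = fun x : ℝ => (fun u => Real.exp (-u)) (b * x)
    from rfl]
  rw [integral_comp_mul_left_Ioi (fun u => Real.exp (-u)) (-t) hb, integral_exp_neg_Ioi]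
  rw [smul_eq_mul, mul_neg, neg_neg]
  ring

lemma ker_integrableOn {β : ℝ} (hβ : β < 0) (t : ℝ) :
    IntegrableOn (fun s : ℝ => Real.exp (β * (t - s))) (Iic t) := by
  have hb : 0 < -β := neg_pos.mpr hβ
  have heq : (fun s : ℝ => Real.exp (β * (t - s)))
      = fun s : ℝ => Real.exp (β * t) * Real.exp (-β * s) := by
    funext s; rw [← Real.exp_add]; ring_nf
  rw [heq]
  exact (aux_integrableOn_exp_mul_Iic hb t).const_mul _

lemma ker_integral {β : ℝ} (hβ : β < 0) (t : ℝ) :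
    ∫ s in Iic t, Real.exp (β * (t - s)) = 1 / (-β) := by
  have hb : 0 < -β := neg_pos.mpr hβ
  have heq : (fun s : ℝ => Real.exp (β * (t - s)))
      = fun s : ℝ => Real.exp (β * t) * Real.exp (-β * s) := by
    funext s; rw [← Real.exp_add]; ring_nf
  rw [heq, integral_const_mul, aux_integral_exp_mul_Iic hb t, neg_mul, Real.exp_neg]
  have h3 : Real.exp (β * t) ≠ 0 := Real.exp_ne_zero _
  field_simp

instance instTowerCLM {k : ℕ} : IsScalarTower ℝ (Euc k →L[ℝ] Euc k) (Euc k →L[ℝ] Euc k) :=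
  ⟨fun r a b => by
    ext x
    simp [smul_eq_mul, ContinuousLinearMap.mul_apply]⟩

instance instSMulCommCLM {k : ℕ} : SMulCommClass ℝ (Euc k →L[ℝ] Euc k) (Euc k →L[ℝ] Euc k) :=
  ⟨fun r a b => by
    ext x
    simp [smul_eq_mul, ContinuousLinearMap.mul_apply]⟩

lemma expOp_continuous {k : ℕ} (A : Euc k →L[ℝ] Euc k) : Continuous fun t : ℝ => expOp A t := by
  letI : NormedAlgebra ℚ (Euc k →L[ℝ] Euc k) := NormedAlgebra.restrictScalars ℚ ℝ _
  exact NormedSpace.exp_continuous.comp (continuous_id.smul continuous_const)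

lemma expOp_zero {k : ℕ} (A : Euc k →L[ℝ] Euc k) : expOp A 0 = 1 := by
  unfold expOp
  rw [show (0:ℝ) • A = 0 from zero_smul ℝ A, NormedSpace.exp_zero]

lemma expOp_add_apply {k : ℕ} (A : Euc k →L[ℝ] Euc k) (t s : ℝ) (y : Euc k) :
    expOp A (t + s) y = expOp A t (expOp A s y) := by
  have h : expOp A (t + s) = expOp A t * expOp A s := by
    unfold expOp
    have hadd : (t + s) • A = t • A + s • A := add_smul t s A
    have hcomm : Commute (t • A) (s • A) := by
      unfold Commute SemiconjBy
      rw [smul_mul_assoc, smul_mul_assoc, mul_smul_comm, mul_smul_comm, smul_comm]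
    rw [hadd]
    letI : NormedAlgebra ℚ (Euc k →L[ℝ] Euc k) := NormedAlgebra.restrictScalars ℚ ℝ _
    exact NormedSpace.exp_add_of_commute hcomm
  rw [h, ContinuousLinearMap.mul_apply]

lemma hasDerivAt_expOp {k : ℕ} (A : Euc k →L[ℝ] Euc k) (t : ℝ) :
    HasDerivAt (fun u : ℝ => expOp A u) (A * expOp A t) t :=
  hasDerivAt_exp_smul_const' A t

end Aux

/-- For frozen slow variable `X`, if `β + L_g < 0` there is a unique bounded
continuous solution `Ȳ` on `(-∞,0]` of the integral equation
`Ȳ(t) = ∫_{-∞}^t e^{(t-s)B} G(X,Ȳ(s),s) ds`; it is continuously differentiable and solves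
`Ȳ' = BȲ + G(X,Ȳ,t)`.  Its value `h⁰(X) = Ȳ(0)` defines the frozen-slow-variable graph map. -/
theorem frozen_fast_equation_existsUnique
    {n m : ℕ} (B : Euc m →L[ℝ] Euc m) (β : ℝ) (hβ : β < 0)
    (hB : ∀ t ≥ (0:ℝ), ∀ y : Euc m, ‖expOp B t y‖ ≤ Real.exp (β * t) * ‖y‖)
    (G : Euc n → Euc m → ℝ → Euc m) (Lg : NNReal)
    (hGc : Continuous fun p : Euc n × Euc m × ℝ => G p.1 p.2.1 p.2.2)
    (hGl : ∀ t : ℝ, LipschitzWith Lg fun p : Euc n × Euc m => G p.1 p.2 t)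
    (hβLg : β + (Lg : ℝ) < 0)
    (X : Euc n) (hGX : ∃ C : ℝ, ∀ t ≤ (0:ℝ), ‖G X 0 t‖ ≤ C) :
    ∃ Ybar : ℝ → Euc m,
      (ContinuousOn Ybar (Set.Iic 0) ∧
        (∃ K : ℝ, ∀ t ≤ (0:ℝ), ‖Ybar t‖ ≤ K) ∧
        ∀ t ≤ (0:ℝ), Ybar t = ∫ s in Set.Iic t, expOp B (t - s) (G X (Ybar s) s)) ∧
      (∀ t ≤ (0:ℝ),
        HasDerivWithinAt Ybar (B (Ybar t) + G X (Ybar t) t) (Set.Iic 0) t) ∧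
      ∀ Z : ℝ → Euc m,
        (ContinuousOn Z (Set.Iic 0) ∧
          (∃ K : ℝ, ∀ t ≤ (0:ℝ), ‖Z t‖ ≤ K) ∧
          ∀ t ≤ (0:ℝ), Z t = ∫ s in Set.Iic t, expOp B (t - s) (G X (Z s) s)) →
        ∀ t ≤ (0:ℝ), Z t = Ybar t := by
  classical
  obtain ⟨C, hC⟩ := hGX
  have hC0 : (0:ℝ) ≤ C := le_trans (norm_nonneg _) (hC 0 le_rfl)
  have hb : (0:ℝ) < -β := neg_pos.mpr hβ
  -- the Banach space of bounded continuous functions on `(-∞,0]`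
  let E := BoundedContinuousFunction (Set.Iic (0:ℝ)) (Euc m)
  -- extension of an element of `E` to all of `ℝ`
  let extF : E → ℝ → Euc m := fun u t => u ⟨min t 0, mem_Iic.mpr (min_le_right t 0)⟩
  have hext_cont : ∀ u : E, Continuous (extF u) := fun u =>
    u.continuous.comp (Continuous.subtype_mk (continuous_id.min continuous_const) _)
  have hext_eq : ∀ (u : E) (t : ℝ) (ht : t ≤ 0), extF u t = u ⟨t, ht⟩ := by
    intro u t ht
    have : (⟨min t 0, mem_Iic.mpr (min_le_right t 0)⟩ : Set.Iic (0:ℝ)) = ⟨t, ht⟩ :=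
      Subtype.ext (min_eq_left ht)
    simp only [extF, this]
  have hext_norm : ∀ (u : E) (t : ℝ), ‖extF u t‖ ≤ ‖u‖ := fun u t =>
    u.norm_coe_le_norm _
  have hext_dist : ∀ (u v : E) (t : ℝ), dist (extF u t) (extF v t) ≤ dist u v := fun u v t =>
    BoundedContinuousFunction.dist_coe_le_dist _
  -- the nonlinearity
  let gF : E → ℝ → Euc m := fun u s => G X (extF u s) s
  have hg_cont : ∀ u : E, Continuous (gF u) := fun u =>
    hGc.comp (continuous_const.prodMk ((hext_cont u).prodMk continuous_id))
  have hGlip : ∀ (s : ℝ) (y z : Euc m), ‖G X y s - G X z s‖ ≤ Lg * ‖y - z‖ := by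
    intro s y z
    have h1 := (hGl s) (X, y) (X, z)
    rw [Prod.edist_eq] at h1
    simp only [edist_self, edist_nndist] at h1
    rw [max_eq_right zero_le] at h1
    have h2 : nndist (G X y s) (G X z s) ≤ Lg * nndist y z := by exact_mod_cast h1
    have h3 := NNReal.coe_le_coe.mpr h2
    push_cast at h3
    rwa [dist_eq_norm, dist_eq_norm] at h3
  have hg_bound : ∀ (u : E) (s : ℝ), s ≤ 0 → ‖gF u s‖ ≤ Lg * ‖u‖ + C := by
    intro u s hs
    have h1 : ‖gF u s‖ ≤ ‖gF u s - G X 0 s‖ + ‖G X 0 s‖ := by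
      simpa using norm_add_le (gF u s - G X 0 s) (G X 0 s)
    have h2 : ‖gF u s - G X 0 s‖ ≤ Lg * ‖extF u s‖ := by
      simpa using hGlip s (extF u s) 0
    have h4 : (Lg:ℝ) * ‖extF u s‖ ≤ Lg * ‖u‖ :=
      mul_le_mul_of_nonneg_left (hext_norm u s) Lg.2
    have h3 := hC s hs
    linarith
  have hg_dist : ∀ (u v : E) (s : ℝ), ‖gF u s - gF v s‖ ≤ Lg * dist u v := by
    intro u v s
    have h1 := hGlip s (extF u s) (extF v s)
    have h2 : ‖extF u s - extF v s‖ ≤ dist u v := by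
      rw [← dist_eq_norm]; exact hext_dist u v s
    calc ‖gF u s - gF v s‖ ≤ Lg * ‖extF u s - extF v s‖ := h1
      _ ≤ Lg * dist u v := mul_le_mul_of_nonneg_left h2 Lg.2
  -- integrand facts
  have hFi_cont : ∀ (u : E) (t : ℝ), Continuous fun s => expOp B (t - s) (gF u s) := fun u t =>
    ((expOp_continuous B).comp (continuous_const.sub continuous_id)).clm_apply (hg_cont u)
  have hae : ∀ (u : E) (t : ℝ), t ≤ 0 →
      ∀ᵐ s ∂(volume.restrict (Set.Iic t)),
        ‖expOp B (t - s) (gF u s)‖ ≤ ((Lg:ℝ) * ‖u‖ + C) * Real.exp (β * (t - s)) := by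
    intro u t ht
    rw [ae_restrict_iff' measurableSet_Iic]
    refine ae_of_all _ fun s hs => ?_
    have hs' : s ≤ t := hs
    have h1 := hB (t - s) (by linarith) (gF u s)
    calc ‖expOp B (t - s) (gF u s)‖ ≤ Real.exp (β * (t - s)) * ‖gF u s‖ := h1
      _ ≤ Real.exp (β * (t - s)) * ((Lg:ℝ) * ‖u‖ + C) :=
          mul_le_mul_of_nonneg_left (hg_bound u s (le_trans hs' ht)) (Real.exp_pos _).le
      _ = ((Lg:ℝ) * ‖u‖ + C) * Real.exp (β * (t - s)) := mul_comm _ _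
  have hInt : ∀ (u : E) (t : ℝ), t ≤ 0 →
      IntegrableOn (fun s => expOp B (t - s) (gF u s)) (Set.Iic t) := by
    intro u t ht
    exact Integrable.mono' ((ker_integrableOn hβ t).const_mul ((Lg:ℝ) * ‖u‖ + C))
      (hFi_cont u t).aestronglyMeasurable (hae u t ht)
  have hIbd : ∀ (u : E) (t : ℝ), t ≤ 0 →
      ‖∫ s in Set.Iic t, expOp B (t - s) (gF u s)‖ ≤ ((Lg:ℝ) * ‖u‖ + C) / (-β) := by
    intro u t ht
    calc ‖∫ s in Set.Iic t, expOp B (t - s) (gF u s)‖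
        ≤ ∫ s in Set.Iic t, ((Lg:ℝ) * ‖u‖ + C) * Real.exp (β * (t - s)) :=
          norm_integral_le_of_norm_le ((ker_integrableOn hβ t).const_mul _) (hae u t ht)
      _ = ((Lg:ℝ) * ‖u‖ + C) * (1 / (-β)) := by rw [integral_const_mul, ker_integral hβ t]
      _ = ((Lg:ℝ) * ‖u‖ + C) / (-β) := by ring
  -- translation invariance
  have hshift : ∀ (f : ℝ → Euc m) (t : ℝ), ∫ s in Set.Iic t, f s = ∫ r in Set.Iic 0, f (r + t) := by
    intro f t
    have h1 := (measurePreserving_add_right (volume : Measure ℝ) t).setIntegral_preimage_emb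
      (Homeomorph.addRight t).measurableEmbedding f (Set.Iic t)
    have hset : ((· + t) ⁻¹' Set.Iic t : Set ℝ) = Set.Iic 0 := by
      ext r; simp
    rw [← h1, hset]
  -- continuity of the integral operator
  have hIcont : ∀ u : E,
      ContinuousOn (fun t => ∫ s in Set.Iic t, expOp B (t - s) (gF u s)) (Set.Iic 0) := by
    intro u
    have heq : ∀ t : ℝ, (∫ s in Set.Iic t, expOp B (t - s) (gF u s))
        = ∫ r in Set.Iic 0, expOp B (-r) (gF u (r + t)) := by
      intro t
      rw [hshift (fun s => expOp B (t - s) (gF u s)) t]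
      simp only [show ∀ r : ℝ, t - (r + t) = -r from fun r => by ring]
    rw [show (fun t => ∫ s in Set.Iic t, expOp B (t - s) (gF u s))
        = fun t => ∫ r in Set.Iic 0, expOp B (-r) (gF u (r + t)) from funext heq]
    refine continuousOn_of_dominated
      (bound := fun r => ((Lg:ℝ) * ‖u‖ + C) * Real.exp ((-β) * r)) ?_ ?_ ?_ ?_
    · intro t _
      exact (((expOp_continuous B).comp continuous_neg).clm_apply
        ((hg_cont u).comp (continuous_id.add continuous_const))).aestronglyMeasurable
    · intro t ht
      rw [ae_restrict_iff' measurableSet_Iic]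
      refine ae_of_all _ fun r hr => ?_
      have hr0 : r ≤ (0:ℝ) := hr
      have ht0 : t ≤ (0:ℝ) := ht
      have h1 := hB (-r) (by linarith) (gF u (r + t))
      have h2 : ‖gF u (r + t)‖ ≤ (Lg:ℝ) * ‖u‖ + C := hg_bound u _ (by linarith)
      calc ‖expOp B (-r) (gF u (r + t))‖ ≤ Real.exp (β * (-r)) * ‖gF u (r + t)‖ := h1
        _ ≤ Real.exp (β * (-r)) * ((Lg:ℝ) * ‖u‖ + C) :=
            mul_le_mul_of_nonneg_left h2 (Real.exp_pos _).le
        _ = ((Lg:ℝ) * ‖u‖ + C) * Real.exp ((-β) * r) := by rw [mul_comm]; ring_nf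
    · exact (aux_integrableOn_exp_mul_Iic hb 0).const_mul _
    · refine ae_of_all _ fun r => ?_
      exact (((expOp B (-r)).continuous).comp
        ((hg_cont u).comp (continuous_const.add continuous_id))).continuousOn
  -- the integral operator on `E`
  let Φ : E → E := fun u => BoundedContinuousFunction.ofNormedAddCommGroup
    (fun τ : Set.Iic (0:ℝ) => ∫ s in Set.Iic (τ:ℝ), expOp B ((τ:ℝ) - s) (gF u s))
    (ContinuousOn.restrict (hIcont u)) (((Lg:ℝ) * ‖u‖ + C) / (-β)) (fun τ => hIbd u τ τ.2)
  have hΦ_apply : ∀ (u : E) (τ : Set.Iic (0:ℝ)),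
      Φ u τ = ∫ s in Set.Iic (τ:ℝ), expOp B ((τ:ℝ) - s) (gF u s) := fun u τ => rfl
  -- contraction
  let K : NNReal := ⟨(Lg:ℝ) / (-β), by positivity⟩
  have hK1 : K < 1 := by
    have h1 : ((Lg:ℝ) / (-β)) < 1 := by
      rw [div_lt_one hb]; linarith
    exact_mod_cast h1
  have hΦlip : LipschitzWith K Φ := by
    apply LipschitzWith.of_dist_le_mul
    intro u v
    rw [BoundedContinuousFunction.dist_le (by positivity)]
    intro τ
    rw [hΦ_apply, hΦ_apply, dist_eq_norm,
      ← integral_sub (hInt u τ τ.2) (hInt v τ τ.2)]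
    have haed : ∀ᵐ s ∂(volume.restrict (Set.Iic (τ:ℝ))),
        ‖expOp B ((τ:ℝ) - s) (gF u s) - expOp B ((τ:ℝ) - s) (gF v s)‖
          ≤ ((Lg:ℝ) * dist u v) * Real.exp (β * ((τ:ℝ) - s)) := by
      rw [ae_restrict_iff' measurableSet_Iic]
      refine ae_of_all _ fun s hs => ?_
      have hs' : s ≤ (τ:ℝ) := hs
      rw [← map_sub]
      have h1 := hB ((τ:ℝ) - s) (by linarith) (gF u s - gF v s)
      calc ‖expOp B ((τ:ℝ) - s) (gF u s - gF v s)‖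
          ≤ Real.exp (β * ((τ:ℝ) - s)) * ‖gF u s - gF v s‖ := h1
        _ ≤ Real.exp (β * ((τ:ℝ) - s)) * ((Lg:ℝ) * dist u v) :=
            mul_le_mul_of_nonneg_left (hg_dist u v s) (Real.exp_pos _).le
        _ = ((Lg:ℝ) * dist u v) * Real.exp (β * ((τ:ℝ) - s)) := mul_comm _ _
    calc ‖∫ s in Set.Iic (τ:ℝ), (expOp B ((τ:ℝ) - s) (gF u s) - expOp B ((τ:ℝ) - s) (gF v s))‖
        ≤ ∫ s in Set.Iic (τ:ℝ), ((Lg:ℝ) * dist u v) * Real.exp (β * ((τ:ℝ) - s)) :=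
          norm_integral_le_of_norm_le ((ker_integrableOn hβ (τ:ℝ)).const_mul _) haed
      _ = ((Lg:ℝ) * dist u v) * (1 / (-β)) := by rw [integral_const_mul, ker_integral hβ (τ:ℝ)]
      _ = (K:ℝ) * dist u v := by
          show (Lg:ℝ) * dist u v * (1 / (-β)) = (Lg:ℝ) / (-β) * dist u v
          ring
  have hcontr : ContractingWith K Φ := ⟨hK1, hΦlip⟩
  let Y : E := ContractingWith.fixedPoint Φ hcontr
  have hYfix : Φ Y = Y := hcontr.fixedPoint_isFixedPt
  have hYeq : ∀ t ≤ (0:ℝ), extF Y t = ∫ s in Set.Iic t, expOp B (t - s) (G X (extF Y s) s) := by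
    intro t ht
    rw [hext_eq Y t ht]
    conv_lhs => rw [← hYfix]
    rw [hΦ_apply]
  let hfun : ℝ → Euc m := fun s => expOp B (-s) (gF Y s)
  have hfun_cont : Continuous hfun :=
    ((expOp_continuous B).comp continuous_neg).clm_apply (hg_cont Y)
  have hfun_int : ∀ t ≤ (0:ℝ), IntegrableOn hfun (Set.Iic t) := by
    intro t ht
    refine Integrable.mono' ((aux_integrableOn_exp_mul_Iic hb t).const_mul ((Lg:ℝ) * ‖Y‖ + C))
      hfun_cont.aestronglyMeasurable ?_
    rw [ae_restrict_iff' measurableSet_Iic]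
    refine ae_of_all _ fun s hs => ?_
    have hs' : s ≤ t := hs
    have h1 := hB (-s) (by linarith) (gF Y s)
    calc ‖hfun s‖ ≤ Real.exp (β * (-s)) * ‖gF Y s‖ := h1
      _ ≤ Real.exp (β * (-s)) * ((Lg:ℝ) * ‖Y‖ + C) :=
          mul_le_mul_of_nonneg_left (hg_bound Y s (by linarith)) (Real.exp_pos _).le
      _ = ((Lg:ℝ) * ‖Y‖ + C) * Real.exp ((-β) * s) := by rw [mul_comm]; ring_nf
  let F : ℝ → Euc m := fun t => ∫ s in Set.Iic t, hfun s
  have hIdent : ∀ t ≤ (0:ℝ), extF Y t = expOp B t (F t) := by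
    intro t ht
    rw [hYeq t ht]
    have hcongr : ∀ s ∈ Set.Iic t,
        expOp B (t - s) (G X (extF Y s) s) = expOp B t (hfun s) := by
      intro s _
      have hts : t - s = t + (-s) := by ring
      rw [hts, expOp_add_apply]
    rw [setIntegral_congr_fun measurableSet_Iic hcongr]
    exact ContinuousLinearMap.integral_comp_comm _ (hfun_int t ht)
  have hF' : ∀ t ≤ (0:ℝ), HasDerivWithinAt F (hfun t) (Set.Iic 0) t := by
    intro t ht
    have hPsi : HasDerivAt (fun r => F t + ∫ x in t..r, hfun x) (hfun t) t :=
      ((hfun_cont.integral_hasStrictDerivAt t t).hasDerivAt).const_add (F t)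
    have hEq : ∀ r ∈ Set.Iic (0:ℝ), F r = F t + ∫ x in t..r, hfun x := by
      intro r hr
      have h2 := intervalIntegral.integral_Iic_sub_Iic (hfun_int t ht) (hfun_int r hr)
      rw [sub_eq_iff_eq_add] at h2
      rw [show F r = ∫ x in Set.Iic r, hfun x from rfl, h2, add_comm]
    exact (hPsi.hasDerivWithinAt).congr hEq (hEq t ht)
  refine ⟨extF Y, ⟨(hext_cont Y).continuousOn, ⟨‖Y‖, fun t _ => hext_norm Y t⟩, hYeq⟩, ?_, ?_⟩
  · intro t ht
    have hc : HasDerivWithinAt (fun r : ℝ => expOp B r) (B * expOp B t) (Set.Iic 0) t :=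
      (hasDerivAt_expOp B t).hasDerivWithinAt
    have hW := hc.clm_apply (hF' t ht)
    have hval : (B * expOp B t) (F t) + expOp B t (hfun t)
        = B (extF Y t) + G X (extF Y t) t := by
      rw [ContinuousLinearMap.mul_apply, ← hIdent t ht]
      congr 1
      show expOp B t (expOp B (-t) (gF Y t)) = gF Y t
      rw [← expOp_add_apply, add_neg_cancel, expOp_zero, ContinuousLinearMap.one_apply]
    rw [hval] at hW
    exact hW.congr (fun r hr => hIdent r hr) (hIdent t ht)
  · rintro Z ⟨hZc, ⟨KZ, hZK⟩, hZeq⟩ t ht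
    let Zb : E := BoundedContinuousFunction.ofNormedAddCommGroup
      (fun τ : Set.Iic (0:ℝ) => Z τ) hZc.restrict KZ (fun τ => hZK τ τ.2)
    have hZfix : Function.IsFixedPt Φ Zb := by
      ext τ
      rw [hΦ_apply]
      have hcongr : ∀ s ∈ Set.Iic (τ:ℝ),
          expOp B ((τ:ℝ) - s) (gF Zb s) = expOp B ((τ:ℝ) - s) (G X (Z s) s) := by
        intro s hs
        have hs0 : s ≤ (0:ℝ) := le_trans hs τ.2
        show expOp B ((τ:ℝ) - s) (G X (Z (min s 0)) s) = expOp B ((τ:ℝ) - s) (G X (Z s) s)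
        rw [min_eq_left hs0]
      rw [setIntegral_congr_fun measurableSet_Iic hcongr, ← hZeq τ τ.2]
      rfl
    have hZY : Zb = Y := hcontr.fixedPoint_unique hZfix
    calc Z t = Zb ⟨t, ht⟩ := rfl
      _ = Y ⟨t, ht⟩ := by rw [hZY]
      _ = extF Y t := (hext_eq Y t ht).symm
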